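/- Fix d₁, d₂, d₃ ∈ ℝ, set d_ij := d_i − d_j, and let I ⊆ ℝ ∖ {0,1} be an interval. Let F₁₂, F₂₁, F₁₃, F₃₁, F₂₃, F₃₂ : I → ℝ be differentiable solutions of the system F₁₂' = F₁₃F₃₂/(z(z−1)); F₁₃' = −F₁₂F₂₃/(z−1) + d₁₃F₁₃/z; F₂₁' = F₂₃F₃₁/(z(z−1)); F₂₃' = F₂₁F₁₃/z + d₂₃F₂₃/(z−1); F₃₁' = −F₃₂F₂₁/(z−1) − d₁₃F₃₁/z; F₃₂' = F₃₁F₁₂/z − d₂₃F₃₂/(z−1). Let R², D be the constants with F₁₂F₂₁ + F₁₃F₃₁ + F₂₃F₃₂ = −R² and F₂₃F₃₁F₁₂ − F₁₃F₃₂F₂₁ + d₂₃F₁₃F₃₁ + d₁₃F₂₃F₃₂ = D on I. Then there exists a twice-differentiable function f : I → ℝ such that f' = F₁₂F₂₁, F₁₃F₃₁ = f − z f' − R²/2 and F₂₃F₃₂ = −f + (z−1) f' − R²/2 on I; moreover any such f satisfies the second-order ODE [z(z−1) f'']² = 4 f' g₁ g₂ + (D − d₂₃ g₁ − d₁₃ g₂)²,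 where g₁ := f − z f' − R²/2 and g₂ := −f + (z−1) f' − R²/2. -/

import Mathlib

theorem exists_f_and_sigma_PVI_equation (d1 d2 d3 R2 D : ℝ) (I : Set ℝ)
    (hI : ∀ z ∈ I, z ≠ 0 ∧ z ≠ 1) (hconv : Convex ℝ I)
    (F12 F21 F13 F31 F23 F32 : ℝ → ℝ)
    (h12 : ∀ z ∈ I, HasDerivAt F12 (F13 z * F32 z / (z * (z - 1))) z)
    (h13 : ∀ z ∈ I, HasDerivAt F13 (-(F12 z * F23 z) / (z - 1) + (d1 - d3) * F13 z / z) z)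
    (h21 : ∀ z ∈ I, HasDerivAt F21 (F23 z * F31 z / (z * (z - 1))) z)
    (h23 : ∀ z ∈ I, HasDerivAt F23 (F21 z * F13 z / z + (d2 - d3) * F23 z / (z - 1)) z)
    (h31 : ∀ z ∈ I, HasDerivAt F31 (-(F32 z * F21 z) / (z - 1) - (d1 - d3) * F31 z / z) z)
    (h32 : ∀ z ∈ I, HasDerivAt F32 (F31 z * F12 z / z - (d2 - d3) * F32 z / (z - 1)) z)
    -- the values of the two first integrals
    (hR : ∀ z ∈ I, F12 z * F21 z + F13 z * F31 z + F23 z * F32 z = -R2)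
    (hD : ∀ z ∈ I, F23 z * F31 z * F12 z - F13 z * F32 z * F21 z
        + (d2 - d3) * (F13 z * F31 z) + (d1 - d3) * (F23 z * F32 z) = D) :
    -- existence of a twice differentiable `f` with `f' = F₁₂F₂₁`,
    -- `F₁₃F₃₁ = f - z f' - R²/2` and `F₂₃F₃₂ = -f + (z-1) f' - R²/2`
    (∃ f : ℝ → ℝ,
      (∀ z ∈ I, HasDerivAt f (F12 z * F21 z) z) ∧
      (∀ z ∈ I, F13 z * F31 z = f z - z * (F12 z * F21 z) - R2 / 2) ∧
      (∀ z ∈ I, F23 z * F32 z = -f z + (z - 1) * (F12 z * F21 z) - R2 / 2)) ∧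
    -- moreover any such `f` satisfies `[z(z-1)f'']² = 4 f' g₁ g₂ + (D - d₂₃g₁ - d₁₃g₂)²`
    (∀ f f'' : ℝ → ℝ,
      (∀ z ∈ I, HasDerivAt f (F12 z * F21 z) z) →
      (∀ z ∈ I, F13 z * F31 z = f z - z * (F12 z * F21 z) - R2 / 2) →
      (∀ z ∈ I, F23 z * F32 z = -f z + (z - 1) * (F12 z * F21 z) - R2 / 2) →
      (∀ z ∈ I, HasDerivAt (fun t => F12 t * F21 t) (f'' z) z) →
      ∀ z ∈ I,
        (z * (z - 1) * f'' z) ^ 2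
          = 4 * (F12 z * F21 z) * (f z - z * (F12 z * F21 z) - R2 / 2)
              * (-f z + (z - 1) * (F12 z * F21 z) - R2 / 2)
            + (D - (d2 - d3) * (f z - z * (F12 z * F21 z) - R2 / 2)
                 - (d1 - d3) * (-f z + (z - 1) * (F12 z * F21 z) - R2 / 2)) ^ 2) := by
  constructor
  · refine ⟨fun z => F13 z * F31 z + z * (F12 z * F21 z) + R2 / 2, ?_, ?_, ?_⟩
    · intro z hz
      obtain ⟨hz0, hz1'⟩ := hI z hz
      have hz1 : z - 1 ≠ 0 := sub_ne_zero.mpr hz1'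
      have h1331 := (h13 z hz).mul (h31 z hz)
      have h1221 := (h12 z hz).mul (h21 z hz)
      have hzmul := (hasDerivAt_id z).mul h1221
      have htot := (h1331.add hzmul).add_const (R2 / 2)
      have hd : (-(F12 z * F23 z) / (z - 1) + (d1 - d3) * F13 z / z) * F31 z
            + F13 z * (-(F32 z * F21 z) / (z - 1) - (d1 - d3) * F31 z / z)
            + (1 * (F12 z * F21 z)
              + z * (F13 z * F32 z / (z * (z - 1)) * F21 z
                + F12 z * (F23 z * F31 z / (z * (z - 1)))))
          = F12 z * F21 z := by
        field_simp
        ring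
      simp only [id_eq, Pi.mul_apply, Pi.add_apply] at htot
      rw [hd] at htot
      exact htot
    · intro z hz; ring
    · intro z hz
      have := hR z hz
      linarith
  · intro f f'' hf' hg1 hg2 hf'' z hz
    obtain ⟨hz0, hz1'⟩ := hI z hz
    have hz1 : z - 1 ≠ 0 := sub_ne_zero.mpr hz1'
    have h1221 := (h12 z hz).mul (h21 z hz)
    have huniq : f'' z = F13 z * F32 z / (z * (z - 1)) * F21 z
        + F12 z * (F23 z * F31 z / (z * (z - 1))) := (hf'' z hz).unique h1221
    have hkey : z * (z - 1) * f'' z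
        = F13 z * F32 z * F21 z + F23 z * F31 z * F12 z := by
      rw [huniq]; field_simp
    rw [← hg1 z hz, ← hg2 z hz]
    have hPQ : D - (d2 - d3) * (F13 z * F31 z) - (d1 - d3) * (F23 z * F32 z)
        = F23 z * F31 z * F12 z - F13 z * F32 z * F21 z := by
      have := hD z hz; linarith
    rw [hkey, hPQ]; ring
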